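/- Let π : R → S be a surjective homomorphism of unital rings, with bsr(R) ≤ d. Suppose a, x ∈ R^{d+1} with a·x = 1, and suppose b̄, ȳ ∈ S^d satisfy (π(a^r) + π(a_0)·b̄) · ȳ = 1, where a = (a_0, a^r) with a^r ∈ R^d. Then there exist b, y ∈ R^d with π(b) = b̄, π(y) = ȳ, and (a^r + a_0·b) · y = 1. -/

import Mathlib

/-- `BsrLe R d` : the Bass stable rank of the unital ring `R` is at most `d`. -/
def BsrLe (R : Type*) [Ring R] (d : ℕ) : Prop :=
  ∀ m : ℕ, d ≤ m → ∀ a : Fin (m + 1) → R,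
    (∃ x : Fin (m + 1) → R, ∑ i, a i * x i = 1) →
    ∃ b : Fin m → R, ∃ y : Fin m → R, ∑ i, (a i.succ + a 0 * b i) * y i = 1

/-- Lifting of row reductions along a surjective morphism, when `bsr R ≤ d`. -/
theorem stmt5 {R S : Type*} [Ring R] [Ring S]
    (π : R →+* S) (hπ : Function.Surjective π)
    {d : ℕ} (h : BsrLe R d)
    (a x : Fin (d + 1) → R) (hax : ∑ i, a i * x i = 1)
    (bb yb : Fin d → S)
    (hby : ∑ i, (π (a i.succ) + π (a 0) * bb i) * yb i = 1) :
    ∃ b y : Fin d → R,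
      (∀ i, π (b i) = bb i) ∧ (∀ i, π (y i) = yb i) ∧
      ∑ i, (a i.succ + a 0 * b i) * y i = 1 := by
  choose b' hb' using fun i => hπ (bb i)
  choose y' hy' using fun i => hπ (yb i)
  set v : Fin d → R := fun i => a i.succ + a 0 * b' i with hv
  set p : R := x 0 - ∑ i : Fin d, b' i * x i.succ with hp
  have hax' : a 0 * p + ∑ i : Fin d, v i * x i.succ = 1 := by
    rw [Fin.sum_univ_succ] at hax
    have e1 : ∑ i : Fin d, v i * x i.succ
        = (∑ i : Fin d, a i.succ * x i.succ) + a 0 * ∑ i : Fin d, b' i * x i.succ := by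
      rw [Finset.mul_sum, ← Finset.sum_add_distrib]
      refine Finset.sum_congr rfl fun i _ => ?_
      simp only [hv]
      rw [add_mul, mul_assoc]
    rw [e1, hp, mul_sub, ← hax]
    abel
  set k : R := 1 - ∑ i : Fin d, v i * y' i with hk
  have hπv : ∀ i, π (v i) = π (a i.succ) + π (a 0) * bb i := by
    intro i; simp [hv, hb']
  have hπk : π k = 0 := by
    have hs : π (∑ i : Fin d, v i * y' i) = 1 := by
      rw [map_sum, ← hby]
      refine Finset.sum_congr rfl fun i _ => ?_
      rw [map_mul, hπv, hy']
    simp [hk, hs]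
  set α : R := p * k with hα
  have hπα : π α = 0 := by simp [hα, hπk]
  set y'' : Fin d → R := fun i => y' i + x i.succ * k with hy''
  have hπy'' : ∀ i, π (y'' i) = yb i := by
    intro i; simp [hy'', hπk, hy']
  have hvy' : ∑ i : Fin d, v i * y' i = 1 - k := by rw [hk, sub_sub_cancel]
  have key : a 0 * α + ∑ i : Fin d, v i * y'' i = 1 := by
    have expand : ∑ i : Fin d, v i * y'' i
        = (∑ i : Fin d, v i * y' i) + (∑ i : Fin d, v i * x i.succ) * k := by
      simp [hy'', mul_add, Finset.sum_add_distrib, Finset.sum_mul, mul_assoc]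
    calc a 0 * α + ∑ i : Fin d, v i * y'' i
        = (a 0 * p + ∑ i : Fin d, v i * x i.succ) * k + (1 - k) := by
          rw [expand, hvy', hα, add_mul, ← mul_assoc]; abel
      _ = 1 := by rw [hax', one_mul]; abel
  obtain ⟨c, z, hcz⟩ := h d le_rfl (Fin.cons (a 0 * α) v)
    ⟨Fin.cons 1 y'', by
      rw [Fin.sum_univ_succ]
      simpa using key⟩
  simp only [Fin.cons_succ, Fin.cons_zero] at hcz
  refine ⟨fun i => b' i + α * c i,
    fun i => y'' i + z i * (1 - ∑ j : Fin d, (a j.succ + a 0 * (b' j + α * c j)) * y'' j),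
    ?_, ?_, ?_⟩
  · intro i; simp [hb' i, hπα]
  · intro i
    set w : Fin d → R := fun j => a j.succ + a 0 * (b' j + α * c j) with hw
    have hπw : ∀ j, π (w j) = π (a j.succ) + π (a 0) * bb j := by
      intro j; simp [hw, hb', hπα, mul_add]
    have hs : π (1 - ∑ j : Fin d, w j * y'' j) = 0 := by
      have : π (∑ j : Fin d, w j * y'' j) = 1 := by
        rw [map_sum, ← hby]
        refine Finset.sum_congr rfl fun j _ => ?_
        rw [map_mul, hπw, hπy'']
      simp [this]
    show π (y'' i + z i * (1 - ∑ j : Fin d, w j * y'' j)) = yb i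
    rw [map_add, map_mul, hs, mul_zero, add_zero, hπy'' i]
  · set w : Fin d → R := fun j => a j.succ + a 0 * (b' j + α * c j) with hw
    have hwv : ∀ j, w j = v j + a 0 * α * c j := by
      intro j; simp [hw, hv, mul_add, mul_assoc]; abel
    have hwz : ∑ j : Fin d, w j * z j = 1 := by
      calc ∑ j : Fin d, w j * z j = ∑ j : Fin d, (v j + a 0 * α * c j) * z j :=
        Finset.sum_congr rfl fun j _ => by rw [hwv]
      _ = 1 := hcz
    set s : R := 1 - ∑ j : Fin d, w j * y'' j with hs
    calc ∑ j : Fin d, w j * (y'' j + z j * s)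
        = (∑ j : Fin d, w j * y'' j) + (∑ j : Fin d, w j * z j) * s := by
          simp [mul_add, Finset.sum_add_distrib, Finset.sum_mul, mul_assoc]
      _ = (1 - s) + 1 * s := by rw [hwz, hs, sub_sub_cancel]
      _ = 1 := by rw [one_mul]; abel
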